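/- For a third-order real tensor A, the block-diagonalized DFT of the tensor transpose equals the conjugate transpose of the block-diagonalized DFT of A: blockdiag(fft₃(Aᵀ)) = blockdiag(fft₃(A))^H. -/

import Mathlib

/-- Unnormalized DFT along a tube. -/
noncomputable def dft {n : ℕ} [NeZero n] (x : ZMod n → ℂ) : ZMod n → ℂ :=
  fun m => ∑ k : ZMod n, x k * Complex.exp (-2 * Real.pi * Complex.I / n) ^ (m.val * k.val)

/-- `fft₃`: DFT along the third index of a tensor. -/
noncomputable def fft3 {n₁ n₂ n₃ : ℕ} [NeZero n₃] (A : Fin n₁ → Fin n₂ → ZMod n₃ → ℂ) :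
    Fin n₁ → Fin n₂ → ZMod n₃ → ℂ :=
  fun i j => dft (A i j)

/-- Block-diagonal matrix whose `k`-th diagonal block is the `k`-th frontal slice. -/
noncomputable def blockdiag {n₁ n₂ n₃ : ℕ} [NeZero n₃] (A : Fin n₁ → Fin n₂ → ZMod n₃ → ℂ) :
    Matrix (Fin n₁ × ZMod n₃) (Fin n₂ × ZMod n₃) ℂ :=
  fun p q => if p.2 = q.2 then A p.1 q.1 p.2 else 0

/-- Tensor transpose: transpose each frontal slice and reverse the order of frontal
slices `2` through `n₃`; with `ZMod n₃` indexing, `(Aᵀ)(j,i,k) = A(i,j,-k)`. -/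
def tTranspose {n₁ n₂ n₃ : ℕ} [NeZero n₃] (A : Fin n₁ → Fin n₂ → ZMod n₃ → ℝ) :
    Fin n₂ → Fin n₁ → ZMod n₃ → ℝ :=
  fun j i k => A i j (-k)

lemma omega_abs {n : ℕ} [NeZero n] :
    ‖Complex.exp (-2 * Real.pi * Complex.I / n)‖ = 1 := by
  rw [Complex.norm_exp]
  have : (-2 * Real.pi * Complex.I / n).re = 0 := by
    simp [Complex.div_re]
  rw [this, Real.exp_zero]

lemma omega_pow_n {n : ℕ} [NeZero n] :
    Complex.exp (-2 * Real.pi * Complex.I / n) ^ n = 1 := by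
  rw [← Complex.exp_nat_mul]
  have hn : (n : ℂ) ≠ 0 := Nat.cast_ne_zero.mpr (NeZero.ne n)
  rw [mul_div_cancel₀ _ hn]
  have : (-2 : ℂ) * Real.pi * Complex.I = (-2 * Real.pi : ℝ) * Complex.I := by
    push_cast; ring
  rw [this, Complex.exp_mul_I]
  simp [Real.cos_neg, Real.sin_neg, Real.cos_two_pi, Real.sin_two_pi,
    show (-2 : ℝ) * Real.pi = -(2 * Real.pi) by ring]

lemma omega_key {n : ℕ} [NeZero n] (m k : ZMod n) :
    Complex.exp (-2 * Real.pi * Complex.I / n) ^ (m.val * (-k).val) =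
      starRingEnd ℂ (Complex.exp (-2 * Real.pi * Complex.I / n) ^ (m.val * k.val)) := by
  set ω := Complex.exp (-2 * Real.pi * Complex.I / n) with hω
  have habs : ‖ω ^ (m.val * k.val)‖ = 1 := by
    rw [norm_pow, omega_abs, one_pow]
  rw [← Complex.inv_eq_conj habs]
  have hdvd : n ∣ (m.val * (-k).val + m.val * k.val) := by
    rw [← Nat.mul_add]
    rcases eq_or_ne k 0 with hk | hk
    · simp [hk]
    · rw [ZMod.neg_val, if_neg hk]
      have : n - k.val + k.val = n := Nat.sub_add_cancel (ZMod.val_lt k).le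
      rw [this]; exact Dvd.intro_left _ rfl
  have h1 : ω ^ (m.val * (-k).val) * ω ^ (m.val * k.val) = 1 := by
    rw [← pow_add]
    obtain ⟨c, hc⟩ := hdvd
    rw [hc, pow_mul, omega_pow_n, one_pow]
  exact eq_inv_of_mul_eq_one_left h1

lemma dft_neg {n : ℕ} [NeZero n] (x : ZMod n → ℝ) (m : ZMod n) :
    dft (fun k => (x (-k) : ℂ)) m = starRingEnd ℂ (dft (fun k => (x k : ℂ)) m) := by
  unfold dft
  rw [map_sum]
  rw [← Equiv.sum_comp (Equiv.neg (ZMod n))]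
  refine Finset.sum_congr rfl fun k _ => ?_
  simp only [Equiv.neg_apply, neg_neg, map_mul, Complex.conj_ofReal]
  rw [omega_key]

/-- For a real tensor `A`, the block-diagonalized DFT of the tensor transpose equals the
conjugate transpose of the block-diagonalized DFT of `A`. -/
theorem blockdiag_fft3_tTranspose {n₁ n₂ n₃ : ℕ} [NeZero n₃]
    (A : Fin n₁ → Fin n₂ → ZMod n₃ → ℝ) :
    blockdiag (fft3 (fun i j k => ((tTranspose A) i j k : ℂ))) =
      Matrix.conjTranspose (blockdiag (fft3 (fun i j k => ((A i j k : ℂ))))) := by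
  ext p q
  simp only [blockdiag, fft3, tTranspose, Matrix.conjTranspose_apply]
  rcases eq_or_ne p.2 q.2 with h | h
  · rw [if_pos h, if_pos h.symm, ← h]
    exact dft_neg (fun k => A q.1 p.1 k) p.2
  · rw [if_neg h, if_neg (Ne.symm h), star_zero]
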